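/- Let R be a Bezout domain (e.g. the Robba ring), M a finite free R-module, φ : R → R an injective ring homomorphism making R flat over itself, and suppose M carries a φ-semilinear endomorphism whose linearization R ⊗_{R,φ} M → M is an isomorphism. If M' ⊆ M is a φ-stable finite free R-submodule such that M/M' is torsion-free of rank equal to rank(M) − rank(M'), then the linearized maps R ⊗_{R,φ} M' → M' and R ⊗_{R,φ} (M/M') → M/M' are both isomorphisms. -/

import Mathlib

/-- `R` viewed as an `R`-module through the ring homomorphism `φ : R →+* R`. -/
def Twisted (R : Type*) [CommRing R] (_φ : R →+* R) : Type _ := R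

instance (R : Type*) [CommRing R] (φ : R →+* R) : AddCommGroup (Twisted R φ) :=
  inferInstanceAs (AddCommGroup R)

instance (R : Type*) [CommRing R] (φ : R →+* R) : Module R (Twisted R φ) :=
  Module.compHom R φ

section LinearizationAux
open Submodule Set
universe u v


/-- Over a Bezout domain, a finitely generated submodule of a module with a finite
basis is free (with a finite basis). -/
theorem IsBezout.exists_basis_of_fg_le {R : Type u} [CommRing R] [IsDomain R] [IsBezout R] :
    ∀ (n : ℕ) {F : Type v} [AddCommGroup F] [Module R F] (b : Module.Basis (Fin n) R F)
      (N : Submodule R F), N.FG → ∃ m : ℕ, Nonempty (Module.Basis (Fin m) R N) := by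
  intro n
  induction n with
  | zero =>
    intro F _ _ b N _
    haveI : Subsingleton (Fin 0 →₀ R) := inferInstance
    haveI : Subsingleton F := b.repr.toEquiv.subsingleton
    exact ⟨0, ⟨Module.Basis.empty N⟩⟩
  | succ n IH =>
    intro F _ _ b N hN
    classical
    -- the last coordinate functional
    set π : F →ₗ[R] R := b.coord (Fin.last n) with hπ
    set f : N →ₗ[R] R := π.comp N.subtype with hf
    haveI : Module.Finite R N := Module.Finite.iff_fg.mpr hN
    have hIfg : (LinearMap.range f).FG := by
      have : Module.Finite R (LinearMap.range f) := Module.Finite.range f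
      exact Module.Finite.iff_fg.mp this
    obtain ⟨a, ha⟩ := IsBezout.isPrincipal_of_FG _ hIfg
    -- the span of the first `n` basis vectors
    set F' : Submodule R F := span R (Set.range (b ∘ Fin.castSucc)) with hF'
    have hbli : LinearIndependent R (b ∘ Fin.castSucc) :=
      b.linearIndependent.comp _ (Fin.castSucc_injective n)
    let bF' : Module.Basis (Fin n) R F' := Module.Basis.span hbli
    have key : ∀ x : F, π x = 0 → x ∈ F' := by
      intro x hx
      have hs := b.sum_repr x
      rw [Fin.sum_univ_castSucc] at hs
      have hlast : b.repr x (Fin.last n) = 0 := by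
        simpa [hπ, Module.Basis.coord_apply] using hx
      rw [hlast, zero_smul, add_zero] at hs
      rw [← hs]
      exact Submodule.sum_mem _ fun i _ =>
        Submodule.smul_mem _ _ (subset_span (Set.mem_range_self i))
    by_cases ha0 : a = 0
    · -- the ideal is zero: `N` lies inside `F'`
      have hle : N ≤ F' := by
        intro x hx
        apply key
        have hmem : f ⟨x, hx⟩ ∈ LinearMap.range f := LinearMap.mem_range_self _ _
        rw [ha, ha0] at hmem
        obtain ⟨c, hc⟩ := Submodule.mem_span_singleton.mp hmem
        simpa [hf] using hc.symm
      haveI : Module.Finite R (N.comap F'.subtype) :=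
        Module.Finite.equiv (Submodule.comapSubtypeEquivOfLe hle).symm
      obtain ⟨m, ⟨bm⟩⟩ := IH bF' (N.comap F'.subtype) (Module.Finite.iff_fg.mp ‹_›)
      exact ⟨m, ⟨bm.map (Submodule.comapSubtypeEquivOfLe hle)⟩⟩
    · -- the ideal is nonzero, hence free of rank 1, and the sequence splits
      have hrange : LinearMap.range f = span R {a} := ha
      let e : R ≃ₗ[R] (span R {a} : Submodule R R) :=
        LinearEquiv.toSpanNonzeroSingleton R R a ha0
      let f' : N →ₗ[R] (span R {a} : Submodule R R) :=
        f.codRestrict _ (fun x => hrange ▸ LinearMap.mem_range_self f x)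
      let g : N →ₗ[R] R := (e.symm : (span R {a} : Submodule R R) →ₗ[R] R).comp f'
      have hgsurj : Function.Surjective g := by
        have hf'surj : Function.Surjective f' := by
          rintro ⟨y, hy⟩
          rw [← hrange] at hy
          obtain ⟨x, hx⟩ := hy
          exact ⟨x, Subtype.ext hx⟩
        exact e.symm.surjective.comp hf'surj
      obtain ⟨s, hs⟩ := Module.projective_lifting_property g LinearMap.id hgsurj
      have hsg : ∀ r : R, g (s r) = r := fun r => DFunLike.congr_fun hs r
      -- ker g and range s are complementary
      have hcompl : IsCompl (LinearMap.ker g) (LinearMap.range s) := by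
        constructor
        · rw [disjoint_iff_inf_le]
          rintro x ⟨hxk, ⟨r, rfl⟩⟩
          have : r = 0 := by simpa [hsg] using hxk
          simp [this]
        · rw [codisjoint_iff_le_sup]
          intro x _
          have : x - s (g x) ∈ LinearMap.ker g := by simp [hsg]
          have hx : x = (x - s (g x)) + s (g x) := by abel
          rw [hx]
          exact Submodule.add_mem_sup this (LinearMap.mem_range_self _ _)
      -- `ker g = ker f` sits inside `F'` and is finitely generated
      have hker : LinearMap.ker g = LinearMap.ker f := by
        ext x
        simp only [LinearMap.mem_ker, g, LinearMap.comp_apply, LinearEquiv.coe_coe]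
        constructor
        · intro h
          have := congrArg e h
          simpa [f', LinearMap.codRestrict, Subtype.ext_iff] using this
        · intro h
          have : f' x = 0 := by
            apply Subtype.ext
            simpa [f', LinearMap.codRestrict] using h
          rw [this, map_zero]
      -- finiteness of ker g
      haveI : Module.Finite R (LinearMap.ker g) := by
        exact Module.Finite.of_surjective
          ((LinearMap.fst R (LinearMap.ker g) (LinearMap.range s)).comp
            (Submodule.prodEquivOfIsCompl _ _ hcompl).symm.toLinearMap)
          (fun y => ⟨(Submodule.prodEquivOfIsCompl _ _ hcompl) (y, 0), by simp⟩)
      -- map ker f into F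
      have hle : Submodule.map N.subtype (LinearMap.ker f) ≤ F' := by
        rintro x ⟨⟨y, hy⟩, hk, rfl⟩
        exact key _ (by simpa [hf] using hk)
      let e1 : (LinearMap.ker f : Submodule R N) ≃ₗ[R]
          Submodule.map N.subtype (LinearMap.ker f) :=
        Submodule.equivMapOfInjective N.subtype (Submodule.injective_subtype N) _
      let e2 : Submodule.comap F'.subtype (Submodule.map N.subtype (LinearMap.ker f)) ≃ₗ[R]
          Submodule.map N.subtype (LinearMap.ker f) :=
        Submodule.comapSubtypeEquivOfLe hle
      haveI : Module.Finite R (LinearMap.ker f) := hker ▸ ‹Module.Finite R (LinearMap.ker g)›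
      haveI : Module.Finite R
          (Submodule.comap F'.subtype (Submodule.map N.subtype (LinearMap.ker f))) :=
        Module.Finite.equiv (e1.trans e2.symm)
      obtain ⟨m, ⟨bm⟩⟩ := IH bF' _ (Module.Finite.iff_fg.mp
        ‹Module.Finite R (Submodule.comap F'.subtype (Submodule.map N.subtype (LinearMap.ker f)))›)
      -- assemble the basis of N
      let bker : Module.Basis (Fin m) R (LinearMap.ker g) :=
        (bm.map (e2.trans e1.symm)).map (LinearEquiv.ofEq _ _ hker.symm)
      have hsinj : Function.Injective s := by
        intro x y hxy
        have := congrArg g hxy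
        simpa [hsg] using this
      let brange : Module.Basis (Fin 1) R (LinearMap.range s) :=
        (Module.Basis.singleton (Fin 1) R).map (LinearEquiv.ofInjective s hsinj)
      let bN : Module.Basis (Fin m ⊕ Fin 1) R N :=
        (bker.prod brange).map (Submodule.prodEquivOfIsCompl _ _ hcompl)
      exact ⟨m + 1, ⟨bN.reindex finSumFinEquiv⟩⟩

/-- Over a Bezout domain, a finitely generated torsion-free module has a finite basis. -/
theorem IsBezout.exists_basis_of_finite_torsionFree {R : Type u} {M : Type v}
    [CommRing R] [IsDomain R] [IsBezout R] [AddCommGroup M] [Module R M]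
    [Module.Finite R M] [NoZeroSMulDivisors R M] :
    ∃ m : ℕ, Nonempty (Module.Basis (Fin m) R M) := by
  classical
  obtain ⟨n, s, hs⟩ := Module.Finite.exists_fin (R := R) (M := M)
  have := exists_maximal_linearIndepOn R s
  let I : Set (Fin n) := this.choose
  obtain ⟨indepI : LinearIndependent R (s ∘ (fun x => x) : I → M), hI :
      ∀ i ∉ I, ∃ a : R, a ≠ 0 ∧ a • s i ∈ span R (s '' I)⟩ := this.choose_spec
  let N := span R (range <| (s ∘ (fun x => x) : I → M))
  let sI_basis : Module.Basis I R N := Module.Basis.span indepI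
  have exists_a : ∀ i : Fin n, ∃ a : R, a ≠ 0 ∧ a • s i ∈ N := by
    intro i
    by_cases hi : i ∈ I
    · exact ⟨1, zero_ne_one.symm, by rw [one_smul]; exact subset_span (mem_range_self (⟨i, hi⟩ : I))⟩
    · simpa [image_eq_range s I, N, Function.comp_def] using hI i hi
  choose a ha ha' using exists_a
  let A := ∏ i, a i
  have hA : A ≠ 0 := by
    rw [Finset.prod_ne_zero_iff]
    simpa using ha
  let φ : M →ₗ[R] M := LinearMap.lsmul R M A
  have hker : LinearMap.ker φ = ⊥ := LinearMap.ker_lsmul hA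
  let ψ := LinearEquiv.ofInjective φ (LinearMap.ker_eq_bot.mp hker)
  have hle : LinearMap.range φ ≤ N := by
    suffices ∀ i, φ (s i) ∈ N by
      rw [LinearMap.range_eq_map, ← hs, map_span_le]
      rintro _ ⟨i, rfl⟩
      apply this
    intro i
    calc
      (∏ j ∈ {i}ᶜ, a j) • a i • s i ∈ N := N.smul_mem _ (ha' i)
      _ = (∏ j, a j) • s i := by rw [Fintype.prod_eq_prod_compl_mul i, mul_smul]
  -- `range φ`, viewed inside `N`, is finitely generated
  haveI : Module.Finite R (LinearMap.range φ) := Module.Finite.range φ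
  haveI : Module.Finite R ((LinearMap.range φ).comap N.subtype) :=
    Module.Finite.equiv (Submodule.comapSubtypeEquivOfLe hle).symm
  -- reindex the basis of `N` by a `Fin`
  haveI : Finite I := Set.toFinite I
  haveI : Fintype I := Fintype.ofFinite I
  let bN : Module.Basis (Fin (Fintype.card I)) R N := sI_basis.reindex (Fintype.equivFin I)
  obtain ⟨m, ⟨bm⟩⟩ := IsBezout.exists_basis_of_fg_le (Fintype.card I) bN
    ((LinearMap.range φ).comap N.subtype) (Module.Finite.iff_fg.mp ‹_›)
  exact ⟨m, ⟨(bm.map (Submodule.comapSubtypeEquivOfLe hle)).map ψ.symm⟩⟩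

section Aux
variable {R : Type*} {M : Type*} [CommRing R] [IsDomain R]
  [AddCommGroup M] [Module R M]

theorem LinearizationAux.main
    [IsBezout R] [Module.Free R M] [Module.Finite R M]
    (φ : R →+* R) (ψ : M →ₛₗ[φ] M)
    {ι : Type*} [Fintype ι] (b b' : Module.Basis ι R M) (hb' : ∀ i, b' i = ψ (b i))
    (M' : Submodule R M) (hstab : ∀ x ∈ M', ψ x ∈ M')
    [Module.Free R M'] [Module.Finite R M']
    [NoZeroSMulDivisors R (M ⧸ M')] :
    (∃ (ι' : Type) (_ : Fintype ι') (c c' : Module.Basis ι' R M'),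
        ∀ i, (c' i : M) = ψ (c i : M)) ∧
    (∃ (ι'' : Type) (_ : Fintype ι'') (d d' : Module.Basis ι'' R (M ⧸ M')),
        ∀ i, ∃ x : M, (Submodule.Quotient.mk x : M ⧸ M') = d i ∧
          (Submodule.Quotient.mk (ψ x) : M ⧸ M') = d' i) := by
  classical
  -- a finite basis of M'
  let cb := Module.Free.chooseBasis R M'
  let c : Module.Basis (Fin (Fintype.card (Module.Free.ChooseBasisIndex R M'))) R M' :=
    cb.reindex (Fintype.equivFin _)
  set n' := Fintype.card (Module.Free.ChooseBasisIndex R M')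
  -- a finite basis of M ⧸ M'
  haveI : Module.Finite R (M ⧸ M') := Module.Finite.quotient R M'
  obtain ⟨m'', ⟨d⟩⟩ := IsBezout.exists_basis_of_finite_torsionFree (R := R) (M := M ⧸ M')
  haveI : Module.Free R (M ⧸ M') := Module.Free.of_basis d
  -- a linear section of the quotient map
  obtain ⟨s, hs⟩ := Module.projective_lifting_property M'.mkQ (LinearMap.id)
    (Submodule.mkQ_surjective M')
  have hsec : ∀ y, M'.mkQ (s y) = y := fun y => DFunLike.congr_fun hs y
  -- the decomposition M ≃ M' × (M ⧸ M')
  let ℓ : (M' × (M ⧸ M')) →ₗ[R] M :=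
    M'.subtype.comp (LinearMap.fst _ _ _) + s.comp (LinearMap.snd _ _ _)
  have hℓ : Function.Bijective ℓ := by
    constructor
    · rintro ⟨x, y⟩ ⟨x', y'⟩ h
      simp only [ℓ, LinearMap.add_apply, LinearMap.comp_apply, LinearMap.fst_apply,
        LinearMap.snd_apply, Submodule.coe_subtype] at h
      have h2 : y = y' := by
        have h3 := congrArg M'.mkQ h
        rw [map_add, map_add, hsec, hsec] at h3
        have e1 : M'.mkQ (x : M) = 0 := by
          simpa [Submodule.mkQ_apply, Submodule.Quotient.mk_eq_zero] using x.2
        have e2 : M'.mkQ (x' : M) = 0 := by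
          simpa [Submodule.mkQ_apply, Submodule.Quotient.mk_eq_zero] using x'.2
        rwa [e1, e2, zero_add, zero_add] at h3
      subst h2
      have : (x : M) = (x' : M) := by
        have := add_right_cancel h
        exact this
      exact Prod.ext (Subtype.ext this) rfl
    · intro m
      refine ⟨⟨⟨m - s (M'.mkQ m), ?_⟩, M'.mkQ m⟩, ?_⟩
      · rw [← Submodule.Quotient.mk_eq_zero]
        simp [Submodule.Quotient.mk''_eq_mk, ← Submodule.mkQ_apply, hsec]
      · simp [ℓ]
  let eqv : (M' × (M ⧸ M')) ≃ₗ[R] M := LinearEquiv.ofBijective ℓ hℓ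
  let u : Module.Basis (Fin n' ⊕ Fin m'') R M := (c.prod d).map eqv
  have hu1 : ∀ i, u (Sum.inl i) = (c i : M) := by
    intro i
    simp only [u, Module.Basis.map_apply, Module.Basis.prod_apply, Sum.elim_inl]
    simp [eqv, ℓ, LinearEquiv.ofBijective_apply, LinearMap.coe_inl]
  have hu2 : ∀ j, u (Sum.inr j) = s (d j) := by
    intro j
    simp only [u, Module.Basis.map_apply, Module.Basis.prod_apply, Sum.elim_inr]
    simp [eqv, ℓ, LinearEquiv.ofBijective_apply]
  -- reindex the given basis of M by the new index type
  let eqι : ι ≃ (Fin n' ⊕ Fin m'') := b.indexEquiv u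
  let b₂ : Module.Basis (Fin n' ⊕ Fin m'') R M := b.reindex eqι
  let b₂' : Module.Basis (Fin n' ⊕ Fin m'') R M := b'.reindex eqι
  have hb₂' : ∀ k, b₂' k = ψ (b₂ k) := by
    intro k
    simp only [b₂, b₂', Module.Basis.reindex_apply, hb']
  -- the matrix of ψ∘u with respect to u
  set T : Matrix (Fin n' ⊕ Fin m'') (Fin n' ⊕ Fin m'') R :=
    u.toMatrix (fun k => ψ (u k)) with hT
  have hmat : b₂'.toMatrix (fun k => ψ (u k)) = φ.mapMatrix (b₂.toMatrix u) := by
    ext i j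
    have hsum : ψ (u j) = ∑ k, φ (b₂.repr (u j) k) • b₂' k := by
      conv_lhs => rw [← b₂.sum_repr (u j)]
      rw [map_sum]
      refine Finset.sum_congr rfl fun k _ => ?_
      rw [ψ.map_smulₛₗ, hb₂']
    rw [Module.Basis.toMatrix_apply, hsum, b₂'.repr_sum_self]
    rfl
  have hTdet : IsUnit T.det := by
    have hT2 : T = u.toMatrix b₂' * φ.mapMatrix (b₂.toMatrix u) := by
      rw [← hmat, Module.Basis.toMatrix_mul_toMatrix]
    rw [hT2, Matrix.det_mul]
    refine IsUnit.mul ?_ ?_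
    · have := u.isUnit_det b₂'
      rwa [Module.Basis.det_apply] at this
    · rw [← RingHom.map_det]
      have h2 : IsUnit (b₂.toMatrix ⇑u).det := by
        have := b₂.isUnit_det u
        rwa [Module.Basis.det_apply] at this
      exact h2.map φ
  -- coordinates of elements of M' with respect to u are supported on the left
  have hMrepr : ∀ y : M', ⇑(u.repr (y : M)) = Sum.elim (⇑(c.repr y)) 0 := by
    intro y
    have h0 : (y : M) = ∑ k, Sum.elim (⇑(c.repr y)) 0 k • u k := by
      rw [Fintype.sum_sum_type]
      simp only [Sum.elim_inl, Sum.elim_inr, Pi.zero_apply, zero_smul,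
        Finset.sum_const_zero, add_zero]
      simp_rw [hu1]
      calc (y : M) = ((∑ i, c.repr y i • c i : M') : M) := by rw [c.sum_repr]
        _ = ∑ i, c.repr y i • (c i : M) := by simp only [Submodule.coe_sum, Submodule.coe_smul]
    rw [h0, u.repr_sum_self]
  have hT21 : ∀ (i : Fin m'') (j : Fin n'), T (Sum.inr i) (Sum.inl j) = 0 := by
    intro i j
    have h1 : ψ (u (Sum.inl j)) = ((⟨ψ (c j), hstab _ (c j).2⟩ : M') : M) := by rw [hu1]
    rw [hT, Module.Basis.toMatrix_apply, h1, hMrepr]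
    rfl
  have hT11 : ∀ (i j : Fin n'),
      T (Sum.inl i) (Sum.inl j) = c.repr ⟨ψ (c j), hstab _ (c j).2⟩ i := by
    intro i j
    have h1 : ψ (u (Sum.inl j)) = ((⟨ψ (c j), hstab _ (c j).2⟩ : M') : M) := by rw [hu1]
    rw [hT, Module.Basis.toMatrix_apply, h1, hMrepr]
    rfl
  have hq : ∀ j : Fin m'', M'.mkQ (ψ (u (Sum.inr j))) =
      ∑ k : Fin m'', T (Sum.inr k) (Sum.inr j) • d k := by
    intro j
    set y := ψ (u (Sum.inr j)) with hy
    conv_lhs => rw [← u.sum_repr y]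
    rw [map_sum, Fintype.sum_sum_type]
    have hz : ∀ i : Fin n', M'.mkQ ((c i : M)) = 0 := fun i => by
      simp [Submodule.mkQ_apply, Submodule.Quotient.mk_eq_zero]
    simp only [map_smul, hu1, hu2, hsec, hz, smul_zero, Finset.sum_const_zero, zero_add]
    rfl
  have hT22 : ∀ (i j : Fin m''), T (Sum.inr i) (Sum.inr j) =
      d.repr (M'.mkQ (ψ (u (Sum.inr j)))) i := by
    intro i j
    have h2 := d.repr_sum_self (fun k => T (Sum.inr k) (Sum.inr j))
    rw [hq j]
    exact (congrFun h2 i).symm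
  -- the block decomposition of T
  let A : Matrix (Fin n') (Fin n') R := Matrix.of fun i j => T (Sum.inl i) (Sum.inl j)
  let B : Matrix (Fin n') (Fin m'') R := Matrix.of fun i j => T (Sum.inl i) (Sum.inr j)
  let D : Matrix (Fin m'') (Fin m'') R := Matrix.of fun i j => T (Sum.inr i) (Sum.inr j)
  have hblocks : T = Matrix.fromBlocks A B 0 D := by
    ext k l
    cases k with
    | inl i =>
      cases l with
      | inl j => rfl
      | inr j => rfl
    | inr i =>
      cases l with
      | inl j => simpa using hT21 i j
      | inr j => rfl
  have hdet : IsUnit (A.det * D.det) := by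
    rw [← Matrix.det_fromBlocks_zero₂₁ A B D, ← hblocks]
    exact hTdet
  have hAdet : IsUnit A.det := isUnit_of_mul_isUnit_left hdet
  have hDdet : IsUnit D.det := isUnit_of_mul_isUnit_right hdet
  constructor
  · -- the submodule part
    let v : Fin n' → M' := fun j => ⟨ψ (c j), hstab _ (c j).2⟩
    have hcv : IsUnit (c.det v) := by
      rw [Module.Basis.det_apply]
      have hAv : c.toMatrix v = A := by
        ext i j
        rw [Module.Basis.toMatrix_apply]
        exact (hT11 i j).symm
      rw [hAv]
      exact hAdet
    obtain ⟨hli, hsp⟩ := (Module.Basis.is_basis_iff_det c).mpr hcv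
    refine ⟨Fin n', inferInstance, c, Module.Basis.mk hli hsp.ge, fun i => ?_⟩
    rw [Module.Basis.mk_apply]
  · -- the quotient part
    let w : Fin m'' → (M ⧸ M') := fun j => M'.mkQ (ψ (u (Sum.inr j)))
    have hdw : IsUnit (d.det w) := by
      rw [Module.Basis.det_apply]
      have hDw : d.toMatrix w = D := by
        ext i j
        rw [Module.Basis.toMatrix_apply]
        exact (hT22 i j).symm
      rw [hDw]
      exact hDdet
    obtain ⟨hli, hsp⟩ := (Module.Basis.is_basis_iff_det d).mpr hdw
    refine ⟨Fin m'', inferInstance, d, Module.Basis.mk hli hsp.ge, fun j => ⟨s (d j), ?_, ?_⟩⟩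
    · rw [← Submodule.mkQ_apply]
      exact hsec (d j)
    · rw [Module.Basis.mk_apply, ← Submodule.mkQ_apply]
      show M'.mkQ (ψ (s (d j))) = w j
      rw [← hu2 j]
end Aux
end LinearizationAux

/-- Let `R` be a Bezout domain, `φ : R →+* R` an injective ring homomorphism making `R` flat
over itself, `M` a finite free `R`-module and `ψ` a `φ`-semilinear endomorphism of `M` whose
linearization `R ⊗_{R,φ} M → M` is an isomorphism (expressed by: `ψ` sends a basis `b` to a
basis `b'`).  If `M' ⊆ M` is a `ψ`-stable finite free submodule with `M/M'` torsion-free of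
complementary rank, then the linearizations of `ψ` on `M'` and on `M/M'` are again
isomorphisms (expressed by: they send bases to bases). -/
theorem linearization_iso_of_sub_and_quotient
    {R M : Type*} [CommRing R] [IsDomain R] [IsBezout R]
    [AddCommGroup M] [Module R M] [Module.Free R M] [Module.Finite R M]
    (φ : R →+* R) (hφ : Function.Injective φ) (hflat : Module.Flat R (Twisted R φ))
    (ψ : M →ₛₗ[φ] M)
    {ι : Type*} [Fintype ι] (b b' : Module.Basis ι R M) (hb' : ∀ i, b' i = ψ (b i))
    (M' : Submodule R M) (hstab : ∀ x ∈ M', ψ x ∈ M')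
    [Module.Free R M'] [Module.Finite R M']
    [NoZeroSMulDivisors R (M ⧸ M')]
    (hrank : Module.rank R M' + Module.rank R (M ⧸ M') = Module.rank R M) :
    (∃ (ι' : Type) (_ : Fintype ι') (c c' : Module.Basis ι' R M'),
        ∀ i, (c' i : M) = ψ (c i : M)) ∧
    (∃ (ι'' : Type) (_ : Fintype ι'') (d d' : Module.Basis ι'' R (M ⧸ M')),
        ∀ i, ∃ x : M, (Submodule.Quotient.mk x : M ⧸ M') = d i ∧
          (Submodule.Quotient.mk (ψ x) : M ⧸ M') = d' i) := by
  exact LinearizationAux.main φ ψ b b' hb' M' hstab
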